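/- Let W₁,...,W_N be subspaces of ℝ^M with orthogonal projections P_n that allow phase retrieval. If the identity I lies in span{P₁,...,P_N}, say I = Σ a_n P_n with Σ a_n ≠ 1, then the orthogonal complements {W_n^⊥}_{n=1}^N also allow phase retrieval. -/

import Mathlib

/-- If subspaces {W_n} allow phase retrieval and the identity is a linear combination
I = Σ a_n P_n of their projections with Σ a_n ≠ 1, then the orthogonal complements
{W_n^⊥} also allow phase retrieval. -/
theorem stmt_11 (M N : ℕ) (W : Fin N → Submodule ℝ (EuclideanSpace ℝ (Fin M)))
    (hPR : ∀ x y : EuclideanSpace ℝ (Fin M),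
        (∀ n, ‖(W n).orthogonalProjectionOnto x‖ = ‖(W n).orthogonalProjectionOnto y‖) →
        x = y ∨ x = -y)
    (a : Fin N → ℝ)
    (hI : ∑ n, a n • (W n).subtypeL.comp ((W n).orthogonalProjectionOnto) =
          ContinuousLinearMap.id ℝ (EuclideanSpace ℝ (Fin M)))
    (ha : ∑ n, a n ≠ 1) :
    ∀ x y : EuclideanSpace ℝ (Fin M),
      (∀ n, ‖(W n)ᗮ.orthogonalProjectionOnto x‖ = ‖(W n)ᗮ.orthogonalProjectionOnto y‖) →
      x = y ∨ x = -y := by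
  intro x y h
  -- key identity: for any z, ‖z‖² = ∑ aₙ ‖Pₙ z‖²
  have key : ∀ z : EuclideanSpace ℝ (Fin M),
      ‖z‖ ^ 2 = ∑ n, a n * ‖(W n).orthogonalProjectionOnto z‖ ^ 2 := by
    intro z
    have hz : ∑ n, a n • (((W n).orthogonalProjectionOnto z : EuclideanSpace ℝ (Fin M))) = z := by
      have := congrArg (fun T => T z) hI
      simpa using this
    have : inner ℝ (∑ n, a n • (((W n).orthogonalProjectionOnto z : EuclideanSpace ℝ (Fin M)))) z
        = inner ℝ z z := by rw [hz]
    rw [sum_inner] at this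
    have hterm : ∀ n, inner ℝ (a n • (((W n).orthogonalProjectionOnto z : EuclideanSpace ℝ (Fin M)))) z
        = a n * ‖(W n).orthogonalProjectionOnto z‖ ^ 2 := by
      intro n
      rw [real_inner_smul_left, ← Submodule.starProjection_apply,
        Submodule.inner_starProjection_left_eq_right, Submodule.starProjection_apply]
      congr 1
      rw [← real_inner_self_eq_norm_sq]
      exact ((Submodule.inner_orthogonalProjectionOnto_eq_of_mem_right (K := W n)
        ((W n).orthogonalProjectionOnto z) z)).symm
    rw [Finset.sum_congr rfl (fun n _ => hterm n)] at this
    rw [← real_inner_self_eq_norm_sq]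
    exact this.symm
  -- Pythagoras: ‖P z‖² = ‖z‖² − ‖P⊥ z‖²
  have pyth : ∀ (n : Fin N) (z : EuclideanSpace ℝ (Fin M)),
      ‖(W n).orthogonalProjectionOnto z‖ ^ 2 = ‖z‖ ^ 2 - ‖(W n)ᗮ.orthogonalProjectionOnto z‖ ^ 2 := by
    intro n z
    have := Submodule.norm_sq_eq_add_norm_sq_projection z (W n)
    linarith
  have key2 : ∀ z : EuclideanSpace ℝ (Fin M),
      (1 - ∑ n, a n) * ‖z‖ ^ 2 = - ∑ n, a n * ‖(W n)ᗮ.orthogonalProjectionOnto z‖ ^ 2 := by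
    intro z
    have := key z
    rw [Finset.sum_congr rfl (fun n _ => by rw [pyth n z])] at this
    simp only [mul_sub] at this
    rw [Finset.sum_sub_distrib, ← Finset.sum_mul] at this
    ring_nf
    ring_nf at this
    linarith
  have hnorm : ‖x‖ ^ 2 = ‖y‖ ^ 2 := by
    have hs : ∑ n, a n * ‖(W n)ᗮ.orthogonalProjectionOnto x‖ ^ 2
        = ∑ n, a n * ‖(W n)ᗮ.orthogonalProjectionOnto y‖ ^ 2 :=
      Finset.sum_congr rfl (fun n _ => by rw [h n])
    have h1 := key2 x
    have h2 := key2 y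
    rw [hs, ← h2] at h1
    have hne : (1 - ∑ n, a n) ≠ 0 := fun hc => ha (by linarith [sub_eq_zero.mp hc])
    exact mul_left_cancel₀ hne h1
  apply hPR
  intro n
  have : ‖(W n).orthogonalProjectionOnto x‖ ^ 2 = ‖(W n).orthogonalProjectionOnto y‖ ^ 2 := by
    rw [pyth, pyth, hnorm, h n]
  nlinarith [norm_nonneg (((W n).orthogonalProjectionOnto) x), norm_nonneg (((W n).orthogonalProjectionOnto) y)]
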